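/- Let Σ be a finite alphabet, a ∈ Σ, and n, m > 0 coprime natural numbers. Define U = {w | |w|_a ≡ n − 1 (mod n)} and V = {w | |w|_a ≡ m − 1 (mod m)}. Then U and V are commutative group languages with sc(U) = n and sc(V) = m, and the shuffle satisfies sc(U ⧢ V) = nm. -/

import Mathlib

open List

def IsCommutativeLang {α : Type} (L : Language α) : Prop :=
  ∀ u v : List α, u ~ v → (u ∈ L ↔ v ∈ L)

def UpClosure {α : Type} (L : Language α) : Language α :=
  {v | ∃ u ∈ L, u <+ v}

def DownClosure {α : Type} (L : Language α) : Language α :=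
  {u | ∃ v ∈ L, u <+ v}

def UpInterior {α : Type} (L : Language α) : Language α :=
  {w | ∃ U : Language α, (∀ x ∈ U, x ∈ L) ∧ UpClosure U = U ∧ w ∈ U}

def DownInterior {α : Type} (L : Language α) : Language α :=
  {w | ∃ U : Language α, (∀ x ∈ U, x ∈ L) ∧ DownClosure U = U ∧ w ∈ U}

def RecognizedBy {α : Type} (L : Language α) (n : ℕ) : Prop :=
  ∃ (σ : Type) (_ : Fintype σ) (M : DFA α σ), Fintype.card σ = n ∧ M.accepts = L

noncomputable def sc {α : Type} (L : Language α) : ℕ :=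
  sInf {n | RecognizedBy L n}

def Nerode {α : Type} (L : Language α) (u v : List α) : Prop :=
  ∀ x : List α, u ++ x ∈ L ↔ v ++ x ∈ L

inductive IsShuffle {α : Type} : List α → List α → List α → Prop
  | nil : IsShuffle [] [] []
  | left (x : α) {u v w : List α} : IsShuffle u v w → IsShuffle (x :: u) v (x :: w)
  | right (y : α) {u v w : List α} : IsShuffle u v w → IsShuffle u (y :: v) (y :: w)

def Shuffle {α : Type} (U V : Language α) : Language α :=
  {w | ∃ u ∈ U, ∃ v ∈ V, IsShuffle u v w}

def IsPermDFA {α σ : Type} (M : DFA α σ) : Prop :=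
  ∀ a : α, Function.Bijective fun q => M.step q a

def IsGroupLang {α : Type} (L : Language α) : Prop :=
  ∃ (σ : Type) (_ : Fintype σ) (M : DFA α σ), IsPermDFA M ∧ M.accepts = L

def wpow {α : Type} (w : List α) (n : ℕ) : List α :=
  (List.replicate n w).flatten

def IsAperiodicDFA {α σ : Type} (M : DFA α σ) : Prop :=
  ∀ (q : σ) (w : List α) (n : ℕ), 1 ≤ n → M.evalFrom q (wpow w n) = q → M.evalFrom q w = q

def IsAperiodicLang {α : Type} (L : Language α) : Prop :=
  ∃ (σ : Type) (_ : Fintype σ) (M : DFA α σ), IsAperiodicDFA M ∧ M.accepts = L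

def ShuffleList {α : Type} : List (Language α) → Language α
  | [] => {([] : List α)}
  | L :: Ls => Shuffle L (ShuffleList Ls)

def UnaryGroupLang {α : Type} (a : α) (U : Language α) : Prop :=
  (∀ w ∈ U, ∀ x ∈ w, x = a) ∧
  ∃ (σ : Type) (_ : Fintype σ) (M : DFA Unit σ), IsPermDFA M ∧
    ∀ n : ℕ, (List.replicate n a ∈ U ↔ List.replicate n () ∈ M.accepts)

def UnaryAperiodicLang {α : Type} (a : α) (U : Language α) : Prop :=
  (∀ w ∈ U, ∀ x ∈ w, x = a) ∧
  ∃ (σ : Type) (_ : Fintype σ) (M : DFA Unit σ), IsAperiodicDFA M ∧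
    ∀ n : ℕ, (List.replicate n a ∈ U ↔ List.replicate n () ∈ M.accepts)

section ScShuffleAux

private lemma aux_shuffle_count {α : Type} [DecidableEq α] (a : α) {u v w : List α}
    (h : IsShuffle u v w) : w.count a = u.count a + v.count a := by
  induction h with
  | nil => simp
  | left x _ ih => simp only [List.count_cons, ih]; ring
  | right y _ ih => simp only [List.count_cons, ih]; ring

private lemma aux_isShuffle_nil_left {α : Type} : ∀ w : List α, IsShuffle [] w w
  | [] => .nil
  | b :: w => .right b (aux_isShuffle_nil_left w)

private lemma aux_exists_shuffle_replicate {α : Type} [DecidableEq α] (a : α) :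
    ∀ (w : List α) (i : ℕ), i ≤ w.count a →
      ∃ v, IsShuffle (List.replicate i a) v w ∧ v.count a = w.count a - i := by
  intro w
  induction w with
  | nil =>
    intro i hi
    simp at hi
    subst hi
    exact ⟨[], .nil, by simp⟩
  | cons b w ih =>
    intro i hi
    by_cases hb : b = a
    · subst hb
      cases i with
      | zero => exact ⟨b :: w, aux_isShuffle_nil_left _, by simp⟩
      | succ i' =>
        have hle : i' ≤ w.count b := by simp [List.count_cons] at hi; omega
        obtain ⟨v, hsh, hc⟩ := ih i' hle
        refine ⟨v, ?_, ?_⟩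
        · rw [List.replicate_succ]; exact .left b hsh
        · simp [List.count_cons] at hi ⊢; omega
    · have hle : i ≤ w.count a := by
        rw [List.count_cons, if_neg (by simpa using hb)] at hi; omega
      obtain ⟨v, hsh, hc⟩ := ih i hle
      refine ⟨b :: v, .right b hsh, ?_⟩
      rw [List.count_cons, List.count_cons, if_neg (by simpa using hb)]
      omega

private lemma aux_mod_eq_of_dvd_succ {p i : ℕ} (hp : 0 < p) (h : p ∣ i + 1) :
    i % p = p - 1 := by
  obtain ⟨q, hq⟩ := h
  cases q with
  | zero => omega
  | succ q' =>
    have h2 : p * (q' + 1) = q' * p + p := by ring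
    rw [h2] at hq
    have e : i = (p - 1) + q' * p := by omega
    rw [e, Nat.add_mul_mod_self_right, Nat.mod_eq_of_lt (show p - 1 < p by omega)]

private lemma aux_dvd_succ_of_mod {p i : ℕ} (hp : 0 < p) (h : i % p = p - 1) :
    p ∣ i + 1 := by
  have h1 : p * (i / p) + (p - 1) = i := by rw [← h]; exact Nat.div_add_mod i p
  exact ⟨i / p + 1, by rw [Nat.mul_add, Nat.mul_one]; omega⟩

private lemma aux_exists_decomp {n m : ℕ} (hn : 0 < n) (hm : 0 < m) (hco : Nat.Coprime n m)
    (k : ℕ) (hk : n * m - 1 ≤ k) :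
    ∃ i j, i % n = n - 1 ∧ j % m = m - 1 ∧ i + j = k := by
  obtain ⟨hj0n, hj0m⟩ := (Nat.chineseRemainder hco (k + 1) (m - 1)).2
  have hlt := Nat.chineseRemainder_lt_mul hco (k + 1) (m - 1) hn.ne' hm.ne'
  set j0 : ℕ := ↑(Nat.chineseRemainder hco (k + 1) (m - 1)) with hj0def
  have hj0k : j0 ≤ k := by omega
  refine ⟨k - j0, j0, ?_, ?_, by omega⟩
  · have h2 : (k - j0 + 1) + j0 ≡ 0 + j0 [MOD n] := by
      have e : (k - j0 + 1) + j0 = k + 1 := by omega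
      rw [e, zero_add]
      exact hj0n.symm
    have h3 : k - j0 + 1 ≡ 0 [MOD n] := Nat.ModEq.add_right_cancel' j0 h2
    exact aux_mod_eq_of_dvd_succ hn (Nat.modEq_zero_iff_dvd.mp h3)
  · have h4 : j0 % m = (m - 1) % m := hj0m
    rw [h4, Nat.mod_eq_of_lt (show m - 1 < m by omega)]

private lemma aux_not_decomp {n m : ℕ} (hn : 0 < n) (hm : 0 < m) (hco : Nat.Coprime n m)
    (h2 : 2 ≤ n * m) :
    ¬ ∃ i j, i % n = n - 1 ∧ j % m = m - 1 ∧ i + j = n * m - 2 := by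
  rintro ⟨i, j, hi, hj, hij⟩
  have hin : n - 1 ≤ i := hi ▸ Nat.mod_le i n
  have hjm : m - 1 ≤ j := hj ▸ Nat.mod_le j m
  by_cases hn1 : n = 1
  · subst hn1; simp only [one_mul] at hij h2; omega
  by_cases hm1 : m = 1
  · subst hm1; simp only [mul_one] at hij h2; omega
  have hn2 : 2 ≤ n := by omega
  have hm2 : 2 ≤ m := by omega
  obtain ⟨c, hc⟩ := aux_dvd_succ_of_mod hn hi
  obtain ⟨d, hd⟩ := aux_dvd_succ_of_mod hm hj
  have hc1 : 1 ≤ c := by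
    rcases Nat.eq_zero_or_pos c with h | h
    · subst h; simp at hc
    · exact h
  have hd1 : 1 ≤ d := by
    rcases Nat.eq_zero_or_pos d with h | h
    · subst h; simp at hd
    · exact h
  have e3 : n * c + m * d = n * m := by omega
  have hdvd : n ∣ m * d := by
    have h4 : n ∣ n * c + m * d := e3 ▸ ⟨m, rfl⟩
    exact (Nat.dvd_add_right ⟨c, rfl⟩).mp h4
  have hB1 : n ≤ d := Nat.le_of_dvd (by omega) (hco.dvd_of_dvd_mul_left hdvd)
  have h5 : m * n ≤ m * d := Nat.mul_le_mul_left m hB1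
  have h6 : n ≤ n * c := Nat.le_mul_of_pos_right n (by omega)
  have h7 : m * n = n * m := mul_comm m n
  omega

private def modDFA {α : Type} [DecidableEq α] (a : α) (p : ℕ) : DFA α (ZMod p) where
  step q b := if b = a then q + 1 else q
  start := 0
  accept := {q | q = ((p - 1 : ℕ) : ZMod p)}

private lemma modDFA_evalFrom {α : Type} [DecidableEq α] (a : α) (p : ℕ) :
    ∀ (w : List α) (q : ZMod p), (modDFA a p).evalFrom q w = q + (w.count a : ZMod p) := by
  intro w
  induction w with
  | nil => intro q; simp [DFA.evalFrom]
  | cons b w ih =>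
    intro q
    have h0 : (modDFA a p).evalFrom q (b :: w)
        = (modDFA a p).evalFrom ((modDFA a p).step q b) w := rfl
    rw [h0, ih]
    by_cases hb : b = a
    · subst hb
      simp [modDFA, List.count_cons]
      ring
    · simp [modDFA, hb, List.count_cons, Ne.symm hb]

private lemma modDFA_accepts {α : Type} [DecidableEq α] (a : α) (p : ℕ) (hp : 0 < p) :
    (modDFA a p).accepts = {w : List α | w.count a % p = p - 1} := by
  ext w
  rw [DFA.mem_accepts]
  show (modDFA a p).evalFrom 0 w ∈ _ ↔ _
  rw [modDFA_evalFrom, zero_add]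
  show ((w.count a : ℕ) : ZMod p) = ((p - 1 : ℕ) : ZMod p) ↔ _
  rw [ZMod.natCast_eq_natCast_iff', Nat.mod_eq_of_lt (show p - 1 < p by omega)]
  rfl

private lemma modDFA_perm {α : Type} [DecidableEq α] (a : α) (p : ℕ) :
    IsPermDFA (modDFA a p) := by
  intro b
  by_cases hb : b = a
  · simpa [modDFA, hb] using (Equiv.addRight (1 : ZMod p)).bijective
  · have hid : Function.Bijective (fun q : ZMod p => q) := Function.bijective_id
    simpa [modDFA, hb] using hid

private lemma aux_nerode_lower {α σ : Type} [Fintype σ] (M : DFA α σ) (L : Language α)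
    (hM : M.accepts = L) (f : ℕ → List α) (N : ℕ)
    (hf : ∀ i j, i < j → j < N → ¬ Nerode L (f i) (f j)) (k : ℕ)
    (hcard : Fintype.card σ = k) : N ≤ k := by
  rw [← hcard]
  have hinj : Function.Injective fun i : Fin N => M.eval (f i.val) := by
    intro i j hij
    by_contra hne
    have hs : M.eval (f i.val) = M.eval (f j.val) := hij
    have key : Nerode L (f i.val) (f j.val) := by
      intro x
      rw [← hM]
      rw [DFA.mem_accepts, DFA.mem_accepts]
      show M.evalFrom M.start (f i.val ++ x) ∈ _ ↔ M.evalFrom M.start (f j.val ++ x) ∈ _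
      rw [DFA.evalFrom_of_append, DFA.evalFrom_of_append]
      show M.evalFrom (M.eval (f i.val)) x ∈ _ ↔ M.evalFrom (M.eval (f j.val)) x ∈ _
      rw [hs]
    have hne' : i.val ≠ j.val := fun h => hne (Fin.ext h)
    rcases Nat.lt_or_ge i.val j.val with h | h
    · exact hf i.val j.val h j.isLt key
    · exact hf j.val i.val (by omega) i.isLt (fun x => (key x).symm)
  calc N = Fintype.card (Fin N) := (Fintype.card_fin N).symm
    _ ≤ Fintype.card σ := Fintype.card_le_of_injective _ hinj

private def shufDFA {α : Type} [DecidableEq α] (a : α) (n m : ℕ) (h : 0 < n * m) :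
    DFA α (Fin (n * m)) where
  step q b := if b = a then ⟨min (q.val + 1) (n * m - 1), by omega⟩ else q
  start := ⟨0, h⟩
  accept := {q | ∃ i j, i % n = n - 1 ∧ j % m = m - 1 ∧ i + j = q.val}

private lemma shufDFA_evalFrom {α : Type} [DecidableEq α] (a : α) (n m : ℕ) (h : 0 < n * m) :
    ∀ (w : List α) (q : Fin (n * m)),
      ((shufDFA a n m h).evalFrom q w).val = min (q.val + w.count a) (n * m - 1) := by
  intro w
  induction w with
  | nil => intro q; simp [DFA.evalFrom]; have := q.isLt; omega
  | cons b w ih =>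
    intro q
    have h0 : (shufDFA a n m h).evalFrom q (b :: w)
        = (shufDFA a n m h).evalFrom ((shufDFA a n m h).step q b) w := rfl
    rw [h0, ih]
    by_cases hb : b = a
    · subst hb
      simp [shufDFA, List.count_cons]
      omega
    · simp [shufDFA, hb, List.count_cons, Ne.symm hb]

end ScShuffleAux


/-- for coprime `n, m > 0`, the commutative group languages
`U = {w | |w|_a ≡ n - 1 (mod n)}` and `V = {w | |w|_a ≡ m - 1 (mod m)}` have
state complexities `n` and `m`, and their shuffle has state complexity `n m`. -/
theorem sc_shuffle_group_lower_bound {α : Type} [Fintype α] [DecidableEq α]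
    (a : α) (n m : ℕ) (hn : 0 < n) (hm : 0 < m) (hco : Nat.Coprime n m)
    (U V : Language α)
    (hU : U = {w : List α | w.count a % n = n - 1})
    (hV : V = {w : List α | w.count a % m = m - 1}) :
    IsCommutativeLang U ∧ IsGroupLang U ∧
    IsCommutativeLang V ∧ IsGroupLang V ∧
    sc U = n ∧ sc V = m ∧ sc (Shuffle U V) = n * m := by
  haveI : NeZero n := ⟨hn.ne'⟩
  haveI : NeZero m := ⟨hm.ne'⟩
  have hnm : 0 < n * m := Nat.mul_pos hn hm
  have hcU : IsCommutativeLang U := by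
    intro u v huv
    rw [hU]
    show u.count a % n = n - 1 ↔ v.count a % n = n - 1
    rw [huv.count_eq a]
  have hcV : IsCommutativeLang V := by
    intro u v huv
    rw [hV]
    show u.count a % m = m - 1 ↔ v.count a % m = m - 1
    rw [huv.count_eq a]
  have hgU : IsGroupLang U :=
    ⟨ZMod n, inferInstance, modDFA a n, modDFA_perm a n, (modDFA_accepts a n hn).trans hU.symm⟩
  have hgV : IsGroupLang V :=
    ⟨ZMod m, inferInstance, modDFA a m, modDFA_perm a m, (modDFA_accepts a m hm).trans hV.symm⟩
  have recU : RecognizedBy U n :=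
    ⟨ZMod n, inferInstance, modDFA a n, ZMod.card n, (modDFA_accepts a n hn).trans hU.symm⟩
  have recV : RecognizedBy V m :=
    ⟨ZMod m, inferInstance, modDFA a m, ZMod.card m, (modDFA_accepts a m hm).trans hV.symm⟩
  have lowMod : ∀ (p : ℕ), 0 < p → ∀ (L : Language α),
      L = {w : List α | w.count a % p = p - 1} → ∀ k, RecognizedBy L k → p ≤ k := by
    rintro p hp L hL k ⟨σ, hσ, M, hcard, hacc⟩
    refine aux_nerode_lower M L hacc (fun i => List.replicate i a) p ?_ k hcard
    intro i j hij hj hNer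
    have hx := hNer (List.replicate (p - 1 - i) a)
    rw [hL] at hx
    have hx2 : (List.replicate i a ++ List.replicate (p - 1 - i) a).count a % p = p - 1 ↔
        (List.replicate j a ++ List.replicate (p - 1 - i) a).count a % p = p - 1 := hx
    simp only [List.count_append, List.count_replicate_self] at hx2
    have e2 : i + (p - 1 - i) = p - 1 := by omega
    have e3 : j + (p - 1 - i) = p + (j - i - 1) := by omega
    rw [e2, e3, Nat.mod_eq_of_lt (show p - 1 < p by omega), Nat.add_mod_left,
      Nat.mod_eq_of_lt (show j - i - 1 < p by omega)] at hx2
    have := hx2.mp rfl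
    omega
  have memU : n ∈ {k | RecognizedBy U k} := recU
  have memV : m ∈ {k | RecognizedBy V k} := recV
  have scU : sc U = n := by
    refine le_antisymm (Nat.sInf_le memU) ?_
    exact lowMod n hn U hU _ (Nat.sInf_mem (Set.nonempty_of_mem memU))
  have scV : sc V = m := by
    refine le_antisymm (Nat.sInf_le memV) ?_
    exact lowMod m hm V hV _ (Nat.sInf_mem (Set.nonempty_of_mem memV))
  have hchar : ∀ w : List α,
      w ∈ Shuffle U V ↔ ∃ i j, i % n = n - 1 ∧ j % m = m - 1 ∧ i + j = w.count a := by
    intro w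
    constructor
    · rintro ⟨u, hu, v, hv, hsh⟩
      rw [hU] at hu
      rw [hV] at hv
      exact ⟨u.count a, v.count a, hu, hv, (aux_shuffle_count a hsh).symm⟩
    · rintro ⟨i, j, hi, hj, hij⟩
      obtain ⟨v, hsh, hc⟩ := aux_exists_shuffle_replicate a w i (by omega)
      refine ⟨List.replicate i a, ?_, v, ?_, hsh⟩
      · rw [hU]
        show (List.replicate i a).count a % n = n - 1
        rw [List.count_replicate_self]
        exact hi
      · rw [hV]
        show v.count a % m = m - 1
        rw [hc, show w.count a - i = j by omega]
        exact hj
  have accS : (shufDFA a n m hnm).accepts = Shuffle U V := by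
    ext w
    rw [DFA.mem_accepts]
    show (∃ i j, i % n = n - 1 ∧ j % m = m - 1 ∧
        i + j = ((shufDFA a n m hnm).eval w).val) ↔ _
    have hev : ((shufDFA a n m hnm).eval w).val = min (w.count a) (n * m - 1) := by
      have h1 := shufDFA_evalFrom a n m hnm w (shufDFA a n m hnm).start
      simpa [shufDFA, DFA.eval] using h1
    rw [hev, hchar w]
    rcases le_or_gt (w.count a) (n * m - 1) with hle | hlt
    · rw [min_eq_left hle]
    · rw [min_eq_right (by omega)]
      constructor
      · intro _
        exact aux_exists_decomp hn hm hco _ (by omega)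
      · intro _
        exact aux_exists_decomp hn hm hco _ (by omega)
  have recS : RecognizedBy (Shuffle U V) (n * m) :=
    ⟨Fin (n * m), inferInstance, shufDFA a n m hnm, Fintype.card_fin _, accS⟩
  have lowS : ∀ k, RecognizedBy (Shuffle U V) k → n * m ≤ k := by
    rintro k ⟨σ, hσ, M, hcard, hacc⟩
    refine aux_nerode_lower M _ hacc (fun i => List.replicate i a) (n * m) ?_ k hcard
    intro i j hij hj hNer
    have h2nm : 2 ≤ n * m := by omega
    have hcnt_i : (List.replicate i a ++ List.replicate (n * m - 2 - i) a).count a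
        = n * m - 2 := by
      rw [List.count_append, List.count_replicate_self, List.count_replicate_self]
      omega
    have hcnt_j : (List.replicate j a ++ List.replicate (n * m - 2 - i) a).count a
        = n * m - 2 + (j - i) := by
      rw [List.count_append, List.count_replicate_self, List.count_replicate_self]
      omega
    have hjmem : List.replicate j a ++ List.replicate (n * m - 2 - i) a ∈ Shuffle U V := by
      rw [hchar, hcnt_j]
      exact aux_exists_decomp hn hm hco _ (by omega)
    have himem := (hNer (List.replicate (n * m - 2 - i) a)).mpr hjmem
    rw [hchar, hcnt_i] at himem
    exact aux_not_decomp hn hm hco h2nm himem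
  have memS : n * m ∈ {k | RecognizedBy (Shuffle U V) k} := recS
  have scS : sc (Shuffle U V) = n * m := by
    refine le_antisymm (Nat.sInf_le memS) ?_
    exact lowS _ (Nat.sInf_mem (Set.nonempty_of_mem memS))
  exact ⟨hcU, hgU, hcV, hgV, scU, scV, scS⟩
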